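/- Let (Ω, 𝒜, P) be a probability space. Let (f_j) and (g_j) be sequences of real-valued random variables on Ω that are pointwise nondecreasing in j and converge pointwise to random variables f and g respectively, with f_1, g_1, f, g all square-integrable. If f_j and g_j are uncorrelated for every j, i.e. Cov(f_j, g_j) = 0, then f and g are uncorrelated: Cov(f, g) = 0. -/

import Mathlib

open MeasureTheory Filter

theorem stmt_10 {Ω : Type*} [MeasurableSpace Ω] (P : Measure Ω) [IsProbabilityMeasure P]
    (f g : ℕ → Ω → ℝ) (flim glim : Ω → ℝ)
    (hfm : ∀ j, Measurable (f j)) (hgm : ∀ j, Measurable (g j))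
    (hflimm : Measurable flim) (hglimm : Measurable glim)
    (hfmono : ∀ ω, Monotone fun j => f j ω) (hgmono : ∀ ω, Monotone fun j => g j ω)
    (hftend : ∀ ω, Tendsto (fun j => f j ω) atTop (nhds (flim ω)))
    (hgtend : ∀ ω, Tendsto (fun j => g j ω) atTop (nhds (glim ω)))
    (hf0 : MemLp (f 0) 2 P) (hg0 : MemLp (g 0) 2 P)
    (hflim : MemLp flim 2 P) (hglim : MemLp glim 2 P)
    (huncorr : ∀ j,
      (∫ ω, f j ω * g j ω ∂P) - (∫ ω, f j ω ∂P) * (∫ ω, g j ω ∂P) = 0) :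
    (∫ ω, flim ω * glim ω ∂P) - (∫ ω, flim ω ∂P) * (∫ ω, glim ω ∂P) = 0 := by
  have hfle : ∀ j ω, f j ω ≤ flim ω := fun j ω => (hfmono ω).ge_of_tendsto (hftend ω) j
  have hgle : ∀ j ω, g j ω ≤ glim ω := fun j ω => (hgmono ω).ge_of_tendsto (hgtend ω) j
  set F : Ω → ℝ := fun ω => |f 0 ω| + |flim ω| with hF
  set G : Ω → ℝ := fun ω => |g 0 ω| + |glim ω| with hG
  have hFb : ∀ j ω, |f j ω| ≤ F ω := by
    intro j ω
    have h1 := hfle j ω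
    have h2 : f 0 ω ≤ f j ω := hfmono ω (Nat.zero_le j)
    have := abs_nonneg (f 0 ω); have := abs_nonneg (flim ω)
    rw [abs_le]; constructor <;> simp only [hF] <;>
      [nlinarith [neg_abs_le (f 0 ω)]; nlinarith [le_abs_self (flim ω)]]
  have hGb : ∀ j ω, |g j ω| ≤ G ω := by
    intro j ω
    have h1 := hgle j ω
    have h2 : g 0 ω ≤ g j ω := hgmono ω (Nat.zero_le j)
    have := abs_nonneg (g 0 ω); have := abs_nonneg (glim ω)
    rw [abs_le]; constructor <;> simp only [hG] <;>
      [nlinarith [neg_abs_le (g 0 ω)]; nlinarith [le_abs_self (glim ω)]]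
  have hFmem : MemLp F 2 P := (hf0.abs).add (hflim.abs)
  have hGmem : MemLp G 2 P := (hg0.abs).add (hglim.abs)
  have hFint : Integrable F P := hFmem.integrable (by norm_num)
  have hGint : Integrable G P := hGmem.integrable (by norm_num)
  have hFGint : Integrable (fun ω => F ω * G ω) P := by
    refine (hFmem.integrable_sq.add hGmem.integrable_sq).mono'
      (hFmem.aestronglyMeasurable.mul hGmem.aestronglyMeasurable)
      (Filter.Eventually.of_forall fun ω => ?_)
    simp only [Pi.add_apply]
    rw [Real.norm_eq_abs, abs_mul]
    nlinarith [abs_nonneg (F ω), abs_nonneg (G ω), sq_abs (F ω), sq_abs (G ω),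
      sq_nonneg (|F ω| - |G ω|)]
  -- convergence of ∫ f j
  have h1 : Tendsto (fun j => ∫ ω, f j ω ∂P) atTop (nhds (∫ ω, flim ω ∂P)) := by
    refine tendsto_integral_of_dominated_convergence F
      (fun j => (hfm j).aestronglyMeasurable) hFint
      (fun j => Filter.Eventually.of_forall fun ω => by
        simpa [Real.norm_eq_abs] using hFb j ω)
      (Filter.Eventually.of_forall hftend)
  have h2 : Tendsto (fun j => ∫ ω, g j ω ∂P) atTop (nhds (∫ ω, glim ω ∂P)) := by
    refine tendsto_integral_of_dominated_convergence G
      (fun j => (hgm j).aestronglyMeasurable) hGint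
      (fun j => Filter.Eventually.of_forall fun ω => by
        simpa [Real.norm_eq_abs] using hGb j ω)
      (Filter.Eventually.of_forall hgtend)
  have h3 : Tendsto (fun j => ∫ ω, f j ω * g j ω ∂P) atTop
      (nhds (∫ ω, flim ω * glim ω ∂P)) := by
    refine tendsto_integral_of_dominated_convergence (fun ω => F ω * G ω)
      (fun j => ((hfm j).mul (hgm j)).aestronglyMeasurable) hFGint
      (fun j => Filter.Eventually.of_forall fun ω => ?_)
      (Filter.Eventually.of_forall fun ω => (hftend ω).mul (hgtend ω))
    have hFnn : 0 ≤ F ω := add_nonneg (abs_nonneg _) (abs_nonneg _)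
    have hGnn : 0 ≤ G ω := add_nonneg (abs_nonneg _) (abs_nonneg _)
    calc ‖f j ω * g j ω‖ = |f j ω| * |g j ω| := by
          simp [Real.norm_eq_abs, abs_mul]
      _ ≤ F ω * G ω := mul_le_mul (hFb j ω) (hGb j ω) (abs_nonneg _) hFnn
  have htot : Tendsto (fun j => (∫ ω, f j ω * g j ω ∂P)
      - (∫ ω, f j ω ∂P) * (∫ ω, g j ω ∂P)) atTop
      (nhds ((∫ ω, flim ω * glim ω ∂P) - (∫ ω, flim ω ∂P) * (∫ ω, glim ω ∂P))) :=
    h3.sub (h1.mul h2)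
  have : Tendsto (fun _ : ℕ => (0 : ℝ)) atTop
      (nhds ((∫ ω, flim ω * glim ω ∂P) - (∫ ω, flim ω ∂P) * (∫ ω, glim ω ∂P))) := by
    simpa [huncorr] using htot
  exact (tendsto_nhds_unique tendsto_const_nhds this).symm
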